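/- Let ω : ℝ → ℝ be positive and twice differentiable with ω - R²ω'' = 0 and ω² - R²(ω')² = a where a > 0, R > 0, and let θ₀ ∈ (0, π/2). Set η(u) = R·ω'(u)/ω(u). Then |η(u)| < 1, √(1 - η(u)²) = √a/ω(u), and v(u) = (R·cot θ₀/√a)·arcsin(η(u)) satisfies v'(u) = cot θ₀/ω(u). -/

import Mathlib

open Real

/-- Proposition 6.2, case `a > 0`: with `η = Rω'/ω` one has `|η| < 1`,
`√(1 - η²) = √a/ω`, and `v(u) = (R cot θ₀/√a)·arcsin η` solves
`v' = cot θ₀/ω`. -/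
theorem stmt_12 (ω : ℝ → ℝ) (R a : ℝ) (hR : 0 < R) (ha : 0 < a)
    (hpos : ∀ u, 0 < ω u)
    (hd : Differentiable ℝ ω) (hd2 : Differentiable ℝ (deriv ω))
    (hode : ∀ u, ω u - R ^ 2 * deriv (deriv ω) u = 0)
    (hfirst : ∀ u, (ω u) ^ 2 - R ^ 2 * (deriv ω u) ^ 2 = a)
    (θ₀ : ℝ) (hθ : θ₀ ∈ Set.Ioo 0 (π / 2))
    (η : ℝ → ℝ) (hη : ∀ u, η u = R * deriv ω u / ω u)
    (v : ℝ → ℝ)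
    (hv : ∀ u, v u = (R * Real.cot θ₀ / Real.sqrt a) * Real.arcsin (η u)) :
    ∀ u, |η u| < 1 ∧ Real.sqrt (1 - (η u) ^ 2) = Real.sqrt a / ω u ∧
      deriv v u = Real.cot θ₀ / ω u := by
  have hηf : η = fun u => R * deriv ω u / ω u := funext hη
  have hvf : v = fun u => (R * Real.cot θ₀ / Real.sqrt a) * Real.arcsin (η u) :=
    funext hv
  subst hηf hvf
  intro u
  have hωu := hpos u
  have hωne : ω u ≠ 0 := ne_of_gt hωu
  have hfe := hfirst u
  have key : 1 - (R * deriv ω u / ω u) ^ 2 = a / ω u ^ 2 := by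
    field_simp
    nlinarith [hfe]
  have hsq : (R * deriv ω u / ω u) ^ 2 < 1 := by
    have hpos2 : 0 < a / ω u ^ 2 := div_pos ha (by positivity)
    linarith
  have habs : |R * deriv ω u / ω u| < 1 := abs_lt.mpr ⟨by nlinarith, by nlinarith⟩
  have hsqrt : Real.sqrt (1 - (R * deriv ω u / ω u) ^ 2) = Real.sqrt a / ω u := by
    rw [key, Real.sqrt_div ha.le, Real.sqrt_sq hωu.le]
  refine ⟨habs, hsqrt, ?_⟩
  -- derivative of η
  have hdd : deriv (deriv ω) u = ω u / R ^ 2 := by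
    have := hode u
    field_simp
    linarith
  have h1 : HasDerivAt ω (deriv ω u) u := (hd u).hasDerivAt
  have h2 : HasDerivAt (deriv ω) (deriv (deriv ω) u) u := (hd2 u).hasDerivAt
  have hη' : HasDerivAt (fun u => R * deriv ω u / ω u)
      (a / (R * ω u ^ 2)) u := by
    have := (h2.const_mul R).div h1 hωne
    refine this.congr_deriv ?_
    symm
    rw [hdd]
    have hRne : R ≠ 0 := ne_of_gt hR
    field_simp
    linear_combination (-1 : ℝ) * hfe
  have hne1 : R * deriv ω u / ω u ≠ -1 := by
    intro h; rw [h] at habs; simp at habs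
  have hne2 : R * deriv ω u / ω u ≠ 1 := by
    intro h; rw [h] at habs; simp at habs
  have harc : HasDerivAt Real.arcsin
      (1 / Real.sqrt (1 - (R * deriv ω u / ω u) ^ 2))
      (R * deriv ω u / ω u) := Real.hasDerivAt_arcsin hne1 hne2
  have hcomp := (harc.comp u hη').const_mul (R * Real.cot θ₀ / Real.sqrt a)
  have hder := hcomp.deriv
  simp only [Function.comp] at hder
  rw [hder, hsqrt]
  have hsa : Real.sqrt a ≠ 0 := by positivity
  have hsa2 : Real.sqrt a * Real.sqrt a = a := Real.mul_self_sqrt ha.le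
  have hRne : R ≠ 0 := ne_of_gt hR
  field_simp
  linear_combination (-Real.cot θ₀) * hsa2
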